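/- A rational number a is a square in ℚ_p (equivalently, a quadratic residue modulo p, when p ∤ numerator and denominator of a) for all but finitely many primes p if and only if a is the square of a rational number. -/

import Mathlib

lemma isSquare_zmod_of_padic {p : ℕ} [Fact p.Prime] {n : ℤ} {y : ℚ_[p]}
    (hy : y ^ 2 = (n : ℚ_[p])) : IsSquare ((n : ZMod p)) := by
  have hn1 : ‖(n : ℚ_[p])‖ ≤ 1 := Padic.norm_int_le_one n
  have hy1 : ‖y‖ ≤ 1 := by
    by_contra hlt
    push_neg at hlt
    have : (1:ℝ) < ‖y‖ ^ 2 := one_lt_pow₀ hlt two_ne_zero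
    rw [← norm_pow, hy] at this
    linarith
  set z : ℤ_[p] := ⟨y, hy1⟩ with hz
  have hz2 : z ^ 2 = (n : ℤ_[p]) := by
    apply PadicInt.ext
    rw [PadicInt.coe_pow, PadicInt.coe_intCast]
    exact hy
  refine ⟨PadicInt.toZMod z, ?_⟩
  have := congrArg PadicInt.toZMod hz2
  rw [map_pow, map_intCast] at this
  rw [← this, sq]


lemma leg_all_one {p : ℕ} [Fact p.Prime] (hp8 : p % 8 = 1) :
    ∀ t : ℕ, t ≠ 0 → (∀ ℓ : ℕ, ℓ.Prime → ℓ ≠ 2 → ℓ ∣ t → p % ℓ = 1) →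
      legendreSym p (t : ℤ) = 1 := by
  have hp2 : p ≠ 2 := fun h => by simp [h] at hp8
  have hp4 : p % 4 = 1 := by
    have : p % 4 = p % 8 % 4 := (Nat.mod_mod_of_dvd p (by norm_num)).symm
    simp [this, hp8]
  intro t
  induction t using Nat.strong_induction_on with
  | _ t IH =>
    intro ht0 hall
    rcases eq_or_ne t 1 with rfl | ht1
    · exact_mod_cast legendreSym.at_one (p := p)
    · have h2 : 2 ≤ t := by omega
      obtain ⟨ℓ, hℓp, hℓd⟩ := Nat.exists_prime_and_dvd ht1
      obtain ⟨t', rfl⟩ := hℓd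
      have ht'0 : t' ≠ 0 := by rintro rfl; simp at ht0
      have ht'lt : t' < ℓ * t' := by
        have h1 := hℓp.two_le
        have h2 := Nat.pos_of_ne_zero ht'0
        nlinarith
      have hIH : legendreSym p (t' : ℤ) = 1 :=
        IH t' ht'lt ht'0 (fun m hm hm2 hmd => hall m hm hm2 (hmd.mul_left ℓ))
      have hone : legendreSym p (ℓ : ℤ) = 1 := by
        rcases eq_or_ne ℓ 2 with rfl | hℓ2
        · have h2p : ¬ p ∣ 2 := fun h =>
            hp2 ((Nat.prime_dvd_prime_iff_eq Fact.out Nat.prime_two).mp h)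
          have h20 : ((2 : ℤ) : ZMod p) ≠ 0 := by
            have : ((2:ℕ) : ZMod p) ≠ 0 := by
              rw [Ne, ZMod.natCast_eq_zero_iff]
              exact h2p
            exact_mod_cast this
          have hres : legendreSym p (2 : ℤ) = 1 := by
            rw [legendreSym.eq_one_iff p h20]
            have := (ZMod.exists_sq_eq_two_iff (p := p) hp2).mpr (Or.inl hp8)
            exact_mod_cast this
          exact_mod_cast hres
        · haveI : Fact ℓ.Prime := ⟨hℓp⟩
          have hmod : p % ℓ = 1 := hall ℓ hℓp hℓ2 ⟨t', rfl⟩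
          have hrec : legendreSym ℓ (p : ℤ) = legendreSym p (ℓ : ℤ) :=
            legendreSym.quadratic_reciprocity_one_mod_four hp4 hℓ2
          rw [← hrec]
          have hcast : ((p : ℤ) : ZMod ℓ) = 1 := by
            have : ((p : ℕ) : ZMod ℓ) = ((1 : ℕ) : ZMod ℓ) := by
              rw [ZMod.natCast_eq_natCast_iff]
              simpa [Nat.ModEq, Nat.mod_eq_of_lt hℓp.one_lt] using hmod
            simpa using this
          have h10 : ((p : ℤ) : ZMod ℓ) ≠ 0 := by rw [hcast]; exact one_ne_zero
          rw [legendreSym.eq_one_iff ℓ h10, hcast]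
          exact IsSquare.one
      push_cast
      rw [legendreSym.mul, hone, hIH, one_mul]

lemma main_aux (m : ℤ) (hm0 : m ≠ 0) (hsf : Squarefree m.natAbs) (hns : ¬ IsSquare m)
    (S : Finset ℕ) :
    ∃ p : ℕ, p.Prime ∧ p ∉ S ∧ ¬ IsSquare ((m : ZMod p)) := by
  by_cases hq : ∃ q : ℕ, q.Prime ∧ q ≠ 2 ∧ q ∣ m.natAbs
  · obtain ⟨q, hqp, hq2, hqd⟩ := hq
    haveI : Fact q.Prime := ⟨hqp⟩
    obtain ⟨t, ht⟩ := hqd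
    have hqt : ¬ q ∣ t := by
      intro ⟨u, hu⟩
      exact hqp.not_isUnit (hsf q (by rw [ht, hu]; ring_nf; exact ⟨u, by ring⟩))
    have ht0 : t ≠ 0 := by rintro rfl; simp [ht] at hm0; omega
    -- nonsquare mod q
    obtain ⟨b, hb⟩ := FiniteField.exists_nonsquare (F := ZMod q)
      (by rw [ZMod.ringChar_zmod_n]; exact hq2)
    have hb0 : b ≠ 0 := fun h => hb (h ▸ ⟨0, by simp⟩)
    -- CRT
    set N : ℕ := 8 * t with hN
    have hco : N.Coprime q := by
      have : ¬ q ∣ N := by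
        intro hd
        rcases (Nat.Prime.dvd_mul hqp).mp hd with h8 | htd
        · have hq2' : q ∣ 2 := hqp.dvd_of_dvd_pow (show q ∣ 2 ^ 3 by norm_num; exact h8)
          exact hq2 ((Nat.prime_dvd_prime_iff_eq hqp Nat.prime_two).mp hq2')
        · exact hqt htd
      exact (Nat.coprime_comm.mp ((Nat.Prime.coprime_iff_not_dvd hqp).mpr this))
    haveI : NeZero (N * q) :=
      ⟨Nat.mul_ne_zero (Nat.mul_ne_zero (by norm_num) ht0) hqp.ne_zero⟩
    set e := ZMod.chineseRemainder hco with he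
    set c : ZMod (N * q) := e.symm (1, b) with hc
    have hcu : IsUnit c := by
      have : IsUnit ((1 : ZMod N), b) :=
        IsUnit.of_mul_eq_one ((1 : ZMod N), b⁻¹)
          (by rw [Prod.mk_mul_mk, mul_one, mul_inv_cancel₀ hb0]; rfl)
      exact this.map e.symm.toRingHom
    have hinf := (Nat.infinite_setOfPred_prime_and_eq_mod hcu).diff S.finite_toSet
    obtain ⟨p, hps⟩ := hinf.nonempty
    rw [Set.mem_diff, Set.mem_setOf_eq] at hps
    obtain ⟨⟨hpp, hpmod⟩, hpS⟩ := hps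
    haveI : Fact p.Prime := ⟨hpp⟩
    -- decompose congruence
    have hsplit : ((p : ZMod N × ZMod q)) = (1, b) := by
      have h1 := congrArg e hpmod
      rw [map_natCast, hc, RingEquiv.apply_symm_apply] at h1
      exact h1
    have hpN : (p : ZMod N) = 1 := by
      have := congrArg Prod.fst hsplit
      simpa using this
    have hpq : (p : ZMod q) = b := by
      have := congrArg Prod.snd hsplit
      simpa using this
    -- p % ℓ = 1 for divisors ℓ of N
    have hmodN : ∀ ℓ : ℕ, ℓ ∣ N → 1 < ℓ → p % ℓ = 1 := by
      intro ℓ hℓd hℓ1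
      have : (p : ZMod ℓ) = ((1:ℕ) : ZMod ℓ) := by
        have := congrArg (ZMod.castHom hℓd (ZMod ℓ)) hpN
        rw [map_natCast, map_one] at this
        exact_mod_cast this
      have := (ZMod.natCast_eq_natCast_iff _ _ _).mp this
      simpa [Nat.ModEq, Nat.mod_eq_of_lt hℓ1] using this
    have hp8 : p % 8 = 1 := hmodN 8 ⟨t, rfl⟩ (by norm_num)
    have hp4 : p % 4 = 1 := by
      have : p % 4 = p % 8 % 4 := (Nat.mod_mod_of_dvd p (by norm_num)).symm
      simp [this, hp8]
    have hp2 : p ≠ 2 := fun h => by simp [h] at hp8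
    -- Legendre symbol computations
    have lqp : legendreSym q (p : ℤ) = -1 := by
      rw [legendreSym.eq_neg_one_iff]
      have hcast : ((p : ℤ) : ZMod q) = b := by exact_mod_cast hpq
      rw [hcast]; exact hb
    have lpq : legendreSym p (q : ℤ) = -1 := by
      rw [← legendreSym.quadratic_reciprocity_one_mod_four hp4 hq2]
      exact lqp
    have lpt : legendreSym p (t : ℤ) = 1 :=
      leg_all_one hp8 t ht0 (fun ℓ hℓ hℓ2 hℓd => hmodN ℓ (hℓd.mul_left 8) hℓ.one_lt)
    have lneg : legendreSym p (-1 : ℤ) = 1 := by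
      have hne : ((-1 : ℤ) : ZMod p) ≠ 0 := by
        push_cast
        exact neg_ne_zero.mpr one_ne_zero
      rw [legendreSym.eq_one_iff p hne]
      push_cast
      exact ZMod.exists_sq_eq_neg_one_iff.mpr (by omega)
    have hlegm : legendreSym p m = -1 := by
      rcases Int.natAbs_eq m with hm | hm
      · rw [hm, ht]
        push_cast
        rw [legendreSym.mul, lpq, lpt]
        ring
      · rw [hm, ht]
        push_cast
        rw [show -((q:ℤ) * (t:ℤ)) = (-1) * ((q:ℤ) * (t:ℤ)) by ring,
          legendreSym.mul, legendreSym.mul, lneg, lpq, lpt]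
        ring
    exact ⟨p, hpp, by exact_mod_cast hpS, (legendreSym.eq_neg_one_iff p).mp hlegm⟩
  · -- no odd prime divisor: m ∈ {-1, 2, -2}
    push_neg at hq
    have hA0 : m.natAbs ≠ 0 := Int.natAbs_ne_zero.mpr hm0
    have hA : m.natAbs = 1 ∨ m.natAbs = 2 := by
      by_contra hcon
      push_neg at hcon
      obtain ⟨h1, h2⟩ := hcon
      have h3 : 3 ≤ m.natAbs := by omega
      rcases Nat.even_or_odd m.natAbs with hev | hod
      · obtain ⟨k, hk⟩ := hev
        have hkA : m.natAbs = 2 * k := by omega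
        have hk2 : ¬ 2 ∣ k := by
          intro ⟨u, hu⟩
          exact Nat.prime_two.not_isUnit (hsf 2 ⟨u, by rw [hkA, hu]; ring⟩)
        have hk1 : k ≠ 1 := by rintro rfl; omega
        have hk0 : k ≠ 0 := by rintro rfl; omega
        have hqp := Nat.minFac_prime hk1
        refine hq k.minFac hqp (fun h => hk2 (h ▸ Nat.minFac_dvd k)) ?_
        exact dvd_trans (Nat.minFac_dvd k) ⟨2, by omega⟩
      · have h1' : m.natAbs ≠ 1 := h1
        have hqp := Nat.minFac_prime h1'
        refine hq m.natAbs.minFac hqp (fun h => ?_) (Nat.minFac_dvd _)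
        have := Nat.minFac_dvd m.natAbs
        rw [h] at this
        exact (Nat.not_odd_iff_even.mpr (even_iff_two_dvd.mpr this)) hod
    -- now handle the three possible values of m
    have hm3 : m = -1 ∨ m = 2 ∨ m = -2 := by
      rcases Int.natAbs_eq m with hm | hm <;> rcases hA with h | h <;> rw [h] at hm
      · exact absurd (hm ▸ IsSquare.one) hns
      · right; left; exact_mod_cast hm
      · left; exact_mod_cast hm
      · right; right; exact_mod_cast hm
    have key : ∀ c : ℕ, c = 3 ∨ c = 5 →
        ∃ p : ℕ, p.Prime ∧ p ∉ S ∧ p % 8 = c ∧ p ≠ 2 := by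
      intro c hc
      have hcu : IsUnit ((c:ℕ) : ZMod 8) := by
        rcases hc with rfl | rfl
        · exact IsUnit.of_mul_eq_one 3 (by decide)
        · exact IsUnit.of_mul_eq_one 5 (by decide)
      have hinf := (Nat.infinite_setOfPred_prime_and_eq_mod hcu).diff S.finite_toSet
      obtain ⟨p, hps⟩ := hinf.nonempty
      rw [Set.mem_diff, Set.mem_setOf_eq] at hps
      obtain ⟨⟨hpp, hpmod⟩, hpS⟩ := hps
      have hp8 : p % 8 = c := by
        have := (ZMod.natCast_eq_natCast_iff p c 8).mp hpmod
        rcases hc with rfl | rfl <;> simpa [Nat.ModEq] using this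
      exact ⟨p, hpp, by exact_mod_cast hpS, hp8, fun h => by rcases hc with rfl | rfl <;> omega⟩
    rcases hm3 with rfl | rfl | rfl
    · obtain ⟨p, hpp, hpS, hp8, hp2⟩ := key 3 (Or.inl rfl)
      haveI : Fact p.Prime := ⟨hpp⟩
      refine ⟨p, hpp, hpS, fun hsq => ?_⟩
      have : IsSquare (-1 : ZMod p) := by push_cast at hsq; exact hsq
      have h4 : p % 4 = 3 := by omega
      exact (ZMod.exists_sq_eq_neg_one_iff.mp this) h4
    · obtain ⟨p, hpp, hpS, hp8, hp2⟩ := key 3 (Or.inl rfl)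
      haveI : Fact p.Prime := ⟨hpp⟩
      refine ⟨p, hpp, hpS, fun hsq => ?_⟩
      have : IsSquare (2 : ZMod p) := by push_cast at hsq; exact hsq
      rcases (ZMod.exists_sq_eq_two_iff hp2).mp this with h | h <;> omega
    · obtain ⟨p, hpp, hpS, hp8, hp2⟩ := key 5 (Or.inr rfl)
      haveI : Fact p.Prime := ⟨hpp⟩
      refine ⟨p, hpp, hpS, fun hsq => ?_⟩
      have : IsSquare (-2 : ZMod p) := by push_cast at hsq; exact hsq
      rcases (ZMod.exists_sq_eq_neg_two_iff hp2).mp this with h | h <;> omega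


/-- A rational number `a` is a square in `ℚ_p` for all but finitely many primes `p`
if and only if `a` is the square of a rational number. -/
theorem square_in_Qp_ae_iff_square (a : ℚ) :
    (∃ S : Finset ℕ, ∀ p : ℕ, ∀ [Fact p.Prime], p ∉ S →
      ∃ y : ℚ_[p], y ^ 2 = (a : ℚ_[p])) ↔ ∃ r : ℚ, a = r ^ 2 := by
  constructor
  · rintro ⟨S, hS⟩
    by_contra hnr
    push_neg at hnr
    have ha0 : a ≠ 0 := fun h => hnr 0 (by simp [h])
    set n : ℤ := a.num * a.den with hn
    have hd0 : (a.den : ℚ) ≠ 0 := by exact_mod_cast a.den_nz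
    have hnum : (a.num : ℚ) = a * a.den := by
      have h := Rat.num_div_den a
      rw [div_eq_iff hd0] at h
      exact h
    have hn0 : n ≠ 0 := mul_ne_zero (Rat.num_ne_zero.mpr ha0) (by exact_mod_cast a.den_nz)
    have hnsq : ¬ IsSquare n := by
      rintro ⟨k, hk⟩
      refine hnr ((k : ℚ) / a.den) ?_
      have : ((n : ℚ)) = (k : ℚ) * k := by exact_mod_cast congrArg (Int.cast : ℤ → ℚ) hk
      rw [div_pow]
      rw [show ((k:ℚ))^2 = (k:ℚ) * k by ring, ← this, hn]
      push_cast
      rw [hnum]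
      field_simp
    obtain ⟨A, b, hAb, hsf⟩ := Nat.sq_mul_squarefree n.natAbs
    have hb0 : (b : ℤ) ≠ 0 := by
      rintro h
      rw [show b = 0 by exact_mod_cast h] at hAb
      simp at hAb
      exact (Int.natAbs_ne_zero.mpr hn0) hAb.symm
    obtain ⟨m, hm_eq, hm_abs⟩ : ∃ m : ℤ, n = (b:ℤ)^2 * m ∧ m.natAbs = A := by
      rcases Int.natAbs_eq n with h | h
      · exact ⟨(A : ℤ), by rw [h, ← hAb]; push_cast; ring, by simp⟩
      · exact ⟨-(A : ℤ), by rw [h, ← hAb]; push_cast; ring, by simp⟩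
    have hm0 : m ≠ 0 := by rintro rfl; simp at hm_eq; exact hn0 hm_eq
    have hmns : ¬ IsSquare m := by
      rintro ⟨r, hr⟩
      exact hnsq ⟨(b:ℤ) * r, by rw [hm_eq, hr]; ring⟩
    obtain ⟨p, hpp, hpS, hpns⟩ := main_aux m hm0 (hm_abs ▸ hsf) hmns S
    haveI : Fact p.Prime := ⟨hpp⟩
    obtain ⟨y, hy⟩ := hS p hpS
    apply hpns
    have hbp : ((b:ℤ) : ℚ_[p]) ≠ 0 := by exact_mod_cast hb0
    have hdp : ((a.den : ℚ_[p])) ≠ 0 := by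
      exact_mod_cast (Nat.cast_ne_zero (R := ℚ_[p])).mpr a.den_nz
    have hz : ((y * a.den) / (b:ℤ)) ^ 2 = (m : ℚ_[p]) := by
      have h1 : (a : ℚ_[p]) * (a.den : ℚ_[p]) ^ 2 = ((n : ℤ) : ℚ_[p]) := by
        have := congrArg (fun x : ℚ => (x : ℚ_[p])) hnum
        push_cast at this ⊢
        rw [hn]
        push_cast
        rw [this]
        ring
      field_simp
      rw [hy, h1, hm_eq]
      push_cast
      ring
    exact isSquare_zmod_of_padic hz
  · rintro ⟨r, rfl⟩
    exact ⟨∅, fun p _ _ => ⟨(r : ℚ_[p]), by push_cast; ring⟩⟩
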